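/- There is no non-trivial polynomial f of degree n ≥ 3 with only real roots, having exactly three distinct roots, such that f shares a root with f^{(n-2)} and with f^{(n-1)}. -/

import Mathlib

open Polynomial
open scoped Nat

private lemma my_esymm_one (s : Multiset ℝ) : s.esymm 1 = s.sum := by
  rw [Multiset.esymm, Multiset.powersetCard_one, Multiset.map_map]
  simp

private lemma my_esymm_two (s : Multiset ℝ) :
    2 * s.esymm 2 = s.sum ^ 2 - (s.map (· ^ 2)).sum := by
  induction s using Multiset.induction with
  | empty => simp [Multiset.esymm, Multiset.powersetCard_zero_right 1]
  | cons a s ih =>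
    have h2 : (a ::ₘ s).esymm 2 = s.esymm 2 + a * s.sum := by
      rw [Multiset.esymm, Multiset.powersetCard_cons, Multiset.map_add, Multiset.sum_add,
        Multiset.map_map, Multiset.powersetCard_one, Multiset.map_map]
      have h3 : (Multiset.prod ∘ Multiset.cons a) ∘ singleton = fun x : ℝ => a * id x := by
        funext x; simp
      rw [h3, Multiset.sum_map_mul_left, Multiset.map_id, Multiset.esymm]
    rw [h2, Multiset.sum_cons, Multiset.map_cons, Multiset.sum_cons]
    linear_combination ih

private lemma my_aux (r s t a b c x : ℝ) (hr : 1 ≤ r) (hs : 1 ≤ s) (ht : 1 ≤ t)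
    (hab : b ≠ a) (hac : c ≠ a)
    (hA : r * a + s * b + t * c = (r + s + t) * a)
    (hB : (r + s + t) * (r + s + t - 1) * x ^ 2
        - 2 * (r + s + t - 1) * (r * a + s * b + t * c) * x
        + ((r * a + s * b + t * c) ^ 2 - (r * a ^ 2 + s * b ^ 2 + t * c ^ 2)) = 0)
    (hx : x = a ∨ x = b) : False := by
  have hb2 : (0:ℝ) < (b - a) ^ 2 := pow_two_pos_of_ne_zero (sub_ne_zero.mpr hab)
  have hc2 : (0:ℝ) < (c - a) ^ 2 := pow_two_pos_of_ne_zero (sub_ne_zero.mpr hac)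
  have key : (r + s + t) * (r + s + t - 1) * (x - a) ^ 2
      = s * (b - a) ^ 2 + t * (c - a) ^ 2 := by
    linear_combination hB + (2 * (r + s + t - 1) * x - (r * a + s * b + t * c)
      - (r + s + t) * a + 2 * a) * hA
  rcases hx with hx | hx
  · rw [hx, sub_self] at key
    have h1 : (b - a) ^ 2 ≤ s * (b - a) ^ 2 := le_mul_of_one_le_left hb2.le hs
    have h2 : (c - a) ^ 2 ≤ t * (c - a) ^ 2 := le_mul_of_one_le_left hc2.le ht
    nlinarith [key]
  · have key2 : ((r + s + t) * (r + s + t - 1) * t - s * (s + t)) * (b - a) ^ 2 = 0 := by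
      linear_combination t * key + (t * (c - a) - s * (b - a)) * hA
        - (r + s + t) * (r + s + t - 1) * t * (x + b - 2 * a) * hx
    have key3 : (r + s + t) * (r + s + t - 1) * t = s * (s + t) := by
      rcases mul_eq_zero.1 key2 with h | h
      · linarith
      · exact absurd h hb2.ne'
    nlinarith [key3, mul_le_mul (show s ≤ r + s + t - 2 by linarith)
        (show s + t ≤ r + s + t - 1 by linarith) (by linarith) (by linarith),
      mul_le_mul_of_nonneg_left ht (by nlinarith : (0:ℝ) ≤ (r + s + t) * (r + s + t - 1))]

private lemma my_aux2 (r1 r2 r3 l1 l2 l3 x y : ℝ)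
    (hr1 : 1 ≤ r1) (hr2 : 1 ≤ r2) (hr3 : 1 ≤ r3)
    (h12 : l1 ≠ l2) (h13 : l1 ≠ l3) (h23 : l2 ≠ l3)
    (hy : y = l1 ∨ y = l2 ∨ y = l3) (hx : x = l1 ∨ x = l2 ∨ x = l3)
    (HA : r1 * l1 + r2 * l2 + r3 * l3 = (r1 + r2 + r3) * y)
    (HB : (r1 + r2 + r3) * (r1 + r2 + r3 - 1) * x ^ 2
        - 2 * (r1 + r2 + r3 - 1) * (r1 * l1 + r2 * l2 + r3 * l3) * x
        + ((r1 * l1 + r2 * l2 + r3 * l3) ^ 2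
          - (r1 * l1 ^ 2 + r2 * l2 ^ 2 + r3 * l3 ^ 2)) = 0) : False := by
  rcases hy with rfl | rfl | rfl
  · rcases hx with hx | hx | hx
    · exact my_aux r1 r2 r3 y l2 l3 x hr1 hr2 hr3 h12.symm h13.symm
        (by linear_combination HA) (by linear_combination HB) (Or.inl hx)
    · exact my_aux r1 r2 r3 y l2 l3 x hr1 hr2 hr3 h12.symm h13.symm
        (by linear_combination HA) (by linear_combination HB) (Or.inr hx)
    · exact my_aux r1 r3 r2 y l3 l2 x hr1 hr3 hr2 h13.symm h12.symm
        (by linear_combination HA) (by linear_combination HB) (Or.inr hx)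
  · rcases hx with hx | hx | hx
    · exact my_aux r2 r1 r3 y l1 l3 x hr2 hr1 hr3 h12 h23.symm
        (by linear_combination HA) (by linear_combination HB) (Or.inr hx)
    · exact my_aux r2 r1 r3 y l1 l3 x hr2 hr1 hr3 h12 h23.symm
        (by linear_combination HA) (by linear_combination HB) (Or.inl hx)
    · exact my_aux r2 r3 r1 y l3 l1 x hr2 hr3 hr1 h23.symm h12
        (by linear_combination HA) (by linear_combination HB) (Or.inr hx)
  · rcases hx with hx | hx | hx
    · exact my_aux r3 r1 r2 y l1 l2 x hr3 hr1 hr2 h13 h23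
        (by linear_combination HA) (by linear_combination HB) (Or.inr hx)
    · exact my_aux r3 r2 r1 y l2 l1 x hr3 hr2 hr1 h23 h13
        (by linear_combination HA) (by linear_combination HB) (Or.inr hx)
    · exact my_aux r3 r1 r2 y l1 l2 x hr3 hr1 hr2 h13 h23
        (by linear_combination HA) (by linear_combination HB) (Or.inl hx)

theorem stmt_6 (n : ℕ) (hn : 3 ≤ n) (f : ℝ[X]) (hdeg : f.natDegree = n)
    (hreal : f.roots.card = n) (hdistinct : f.roots.toFinset.card = 3)
    (h2 : ∃ x : ℝ, f.eval x = 0 ∧ (derivative^[n - 2] f).eval x = 0)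
    (h1 : ∃ x : ℝ, f.eval x = 0 ∧ (derivative^[n - 1] f).eval x = 0) :
    False := by
  obtain ⟨x2, hx2f, hx2d⟩ := h2
  obtain ⟨x1, hx1f, hx1d⟩ := h1
  have hf0 : f ≠ 0 := by
    intro h
    rw [h, natDegree_zero] at hdeg
    omega
  have ha0 : f.leadingCoeff ≠ 0 := leadingCoeff_ne_zero.mpr hf0
  set a := f.leadingCoeff with ha
  set L := f.roots with hL
  obtain ⟨l1, l2, l3, h12, h13, h23, hset⟩ := Finset.card_eq_three.mp hdistinct
  set r1 := L.count l1 with hr1def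
  set r2 := L.count l2 with hr2def
  set r3 := L.count l3 with hr3def
  have hm1 : l1 ∈ L := by rw [← Multiset.mem_toFinset, hset]; simp
  have hm2 : l2 ∈ L := by rw [← Multiset.mem_toFinset, hset]; simp
  have hm3 : l3 ∈ L := by rw [← Multiset.mem_toFinset, hset]; simp
  have hr1 : 1 ≤ r1 := Multiset.count_pos.mpr hm1
  have hr2 : 1 ≤ r2 := Multiset.count_pos.mpr hm2
  have hr3 : 1 ≤ r3 := Multiset.count_pos.mpr hm3
  -- cardinality
  have hcard : r1 + r2 + r3 = n := by
    have h := Multiset.toFinset_sum_count_eq L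
    rw [hset, Finset.sum_insert (by simp [h12, h13]),
      Finset.sum_insert (by simp [h23]), Finset.sum_singleton, hreal] at h
    omega
  have Hn : (n : ℝ) = (r1 : ℝ) + (r2 : ℝ) + (r3 : ℝ) := by
    rw [← hcard]; push_cast; ring
  -- sums
  have hsum : L.sum = (r1 : ℝ) * l1 + (r2 : ℝ) * l2 + (r3 : ℝ) * l3 := by
    have h := Finset.sum_multiset_map_count L (id : ℝ → ℝ)
    rw [Multiset.map_id, hset, Finset.sum_insert (by simp [h12, h13]),
      Finset.sum_insert (by simp [h23]), Finset.sum_singleton] at h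
    rw [h]
    simp [nsmul_eq_mul]
    ring
  have hsq : (L.map (· ^ 2)).sum
      = (r1 : ℝ) * l1 ^ 2 + (r2 : ℝ) * l2 ^ 2 + (r3 : ℝ) * l3 ^ 2 := by
    have h := Finset.sum_multiset_map_count L (fun x : ℝ => x ^ 2)
    rw [hset, Finset.sum_insert (by simp [h12, h13]),
      Finset.sum_insert (by simp [h23]), Finset.sum_singleton] at h
    rw [h]
    simp [nsmul_eq_mul]
    ring
  -- Vieta coefficients
  have hroots_card : L.card = f.natDegree := by rw [hreal, hdeg]
  have hcoeff1 : f.coeff (n - 1) = -(a * L.sum) := by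
    have h := Polynomial.coeff_eq_esymm_roots_of_card hroots_card
      (show n - 1 ≤ f.natDegree by omega)
    rw [hdeg, show n - (n - 1) = 1 by omega, my_esymm_one] at h
    rw [h]; ring
  have hcoeff2 : f.coeff (n - 2) = a * L.esymm 2 := by
    have h := Polynomial.coeff_eq_esymm_roots_of_card hroots_card
      (show n - 2 ≤ f.natDegree by omega)
    rw [hdeg, show n - (n - 2) = 2 by omega] at h
    rw [h]; ring
  have hcoeffn : f.coeff n = a := by rw [← hdeg, coeff_natDegree]
  -- descFactorial facts
  have hD3 : n.descFactorial (n - 1) = n ! := by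
    have h := Nat.descFactorial_succ n (n - 1)
    rw [show (n - 1) + 1 = n by omega, Nat.descFactorial_self,
      show n - (n - 1) = 1 by omega, one_mul] at h
    exact h.symm
  have hD1 : (n - 1).descFactorial (n - 2) = (n - 1)! := by
    have h := Nat.descFactorial_succ (n - 1) (n - 2)
    rw [show (n - 2) + 1 = n - 1 by omega, Nat.descFactorial_self,
      show (n - 1) - (n - 2) = 1 by omega, one_mul] at h
    exact h.symm
  have hD2 : 2 * n.descFactorial (n - 2) = n ! := by
    have h := Nat.descFactorial_succ n (n - 2)
    rw [show (n - 2) + 1 = n - 1 by omega, hD3, show n - (n - 2) = 2 by omega] at h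
    omega
  -- factorial cast facts
  have hfac1 : (n - 1) * (n - 2)! = (n - 1)! := by
    rw [show n - 2 = (n - 1) - 1 by omega]
    exact Nat.mul_factorial_pred (by omega)
  have hfac2 : n * (n - 1)! = n ! := Nat.mul_factorial_pred (by omega)
  have hF1 : ((n - 1)! : ℝ) = ((n : ℝ) - 1) * ((n - 2)! : ℝ) := by
    rw [← hfac1]; push_cast [Nat.cast_sub (by omega : 1 ≤ n)]; ring
  have hF3 : ((n.descFactorial (n - 1) : ℕ) : ℝ) = (n : ℝ) * ((n - 1)! : ℝ) := by
    rw [hD3, ← hfac2]; push_cast; ring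
  have hF2 : 2 * ((n.descFactorial (n - 2) : ℕ) : ℝ)
      = (n : ℝ) * ((n : ℝ) - 1) * ((n - 2)! : ℝ) := by
    rw [show ((2 : ℝ) * ((n.descFactorial (n - 2) : ℕ) : ℝ))
      = ((2 * n.descFactorial (n - 2) : ℕ) : ℝ) by push_cast; ring, hD2, ← hfac2, ← hfac1]
    push_cast [Nat.cast_sub (by omega : 1 ≤ n)]
    ring
  -- evaluate the (n-1)-st derivative
  have hdeg1 : (derivative^[n - 1] f).natDegree < 2 := by
    have h := f.natDegree_iterate_derivative (n - 1)
    rw [hdeg] at h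
    omega
  rw [Polynomial.eval_eq_sum_range' hdeg1 x1, Finset.sum_range_succ,
    Finset.sum_range_one] at hx1d
  simp only [Polynomial.coeff_iterate_derivative] at hx1d
  rw [show 0 + (n - 1) = n - 1 by omega, show 1 + (n - 1) = n by omega] at hx1d
  rw [hcoeff1, hcoeffn, Nat.descFactorial_self] at hx1d
  have HEV1 : ((n - 1)! : ℝ) * (-(a * L.sum))
      + ((n.descFactorial (n - 1) : ℕ) : ℝ) * (a * x1) = 0 := by
    rw [← hx1d]
    push_cast [nsmul_eq_mul]
    ring
  -- evaluate the (n-2)-nd derivative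
  have hdeg2 : (derivative^[n - 2] f).natDegree < 3 := by
    have h := f.natDegree_iterate_derivative (n - 2)
    rw [hdeg] at h
    omega
  rw [Polynomial.eval_eq_sum_range' hdeg2 x2, Finset.sum_range_succ,
    Finset.sum_range_succ, Finset.sum_range_one] at hx2d
  simp only [Polynomial.coeff_iterate_derivative] at hx2d
  rw [show 0 + (n - 2) = n - 2 by omega, show 1 + (n - 2) = n - 1 by omega,
    show 2 + (n - 2) = n by omega] at hx2d
  rw [hcoeff2, hcoeff1, hcoeffn, Nat.descFactorial_self, hD1] at hx2d
  have HEV2 : ((n - 2)! : ℝ) * (a * L.esymm 2)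
      + ((n - 1)! : ℝ) * (-(a * L.sum)) * x2
      + ((n.descFactorial (n - 2) : ℕ) : ℝ) * (a * x2 ^ 2) = 0 := by
    rw [← hx2d]
    push_cast [nsmul_eq_mul]
    ring
  -- derive the clean real equations
  have hFa1 : ((n - 1)! : ℝ) * a ≠ 0 :=
    mul_ne_zero (Nat.cast_ne_zero.mpr (Nat.factorial_ne_zero _)) ha0
  have hFa2 : ((n - 2)! : ℝ) * a ≠ 0 :=
    mul_ne_zero (Nat.cast_ne_zero.mpr (Nat.factorial_ne_zero _)) ha0
  have key1 : (((n - 1)! : ℝ) * a) * ((n : ℝ) * x1 - L.sum) = 0 := by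
    linear_combination HEV1 - (a * x1) * hF3
  have HA0 : (n : ℝ) * x1 - L.sum = 0 := (mul_eq_zero.mp key1).resolve_left hFa1
  have key2 : (((n - 2)! : ℝ) * a) * (2 * L.esymm 2 - 2 * ((n : ℝ) - 1) * L.sum * x2
      + (n : ℝ) * ((n : ℝ) - 1) * x2 ^ 2) = 0 := by
    linear_combination 2 * HEV2 + (2 * a * L.sum * x2) * hF1 - (a * x2 ^ 2) * hF2
  have G2 : 2 * L.esymm 2 - 2 * ((n : ℝ) - 1) * L.sum * x2
      + (n : ℝ) * ((n : ℝ) - 1) * x2 ^ 2 = 0 := (mul_eq_zero.mp key2).resolve_left hFa2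
  have he2 := my_esymm_two L
  -- memberships
  have hx1m : x1 = l1 ∨ x1 = l2 ∨ x1 = l3 := by
    have h : x1 ∈ L.toFinset :=
      Multiset.mem_toFinset.mpr (Polynomial.mem_roots'.mpr ⟨hf0, hx1f⟩)
    rw [hset] at h
    simpa using h
  have hx2m : x2 = l1 ∨ x2 = l2 ∨ x2 = l3 := by
    have h : x2 ∈ L.toFinset :=
      Multiset.mem_toFinset.mpr (Polynomial.mem_roots'.mpr ⟨hf0, hx2f⟩)
    rw [hset] at h
    simpa using h
  -- assemble
  rw [hsum, hsq] at he2
  rw [Hn, hsum] at G2 HA0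
  refine my_aux2 (r1 : ℝ) (r2 : ℝ) (r3 : ℝ) l1 l2 l3 x2 x1
    (by exact_mod_cast hr1) (by exact_mod_cast hr2) (by exact_mod_cast hr3)
    h12 h13 h23 hx1m hx2m (by linear_combination (-1 : ℝ) * HA0) (by linear_combination G2 - he2)
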